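/- arXiv:2005.09352 — 8 statements merged into one kernel-verified Lean document; each statement's English description precedes it below -/
import Mathlib

section
/- For integers q ≥ 2, n ≥ 5 with n ≥ q, the sum over k from 1 to n of C(n,k) * (q-1)^k / k is at most q^(n+1) / ((q-1)(n-2)). -/
open Finset

lemma ident_aux (x : ℝ) : ∀ n : ℕ,
    ∑ k ∈ Finset.range (n+1), (n.choose k : ℝ) * x ^ k / k
      = ∑ m ∈ Finset.range (n+1), ((1+x) ^ m - 1) / m := by
  intro n
  induction n with
  | zero => simp
  | succ n ih =>
    have key : ∀ i : ℕ, (n.choose i : ℝ) * x ^ (i+1) / ((i:ℝ)+1)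
        = ((n+1).choose (i+1) : ℝ) * x ^ (i+1) / ((n:ℝ)+1) := by
      intro i
      have h := Nat.add_one_mul_choose_eq n i
      have h' : ((n:ℝ)+1) * (n.choose i : ℝ) = ((n+1).choose (i+1) : ℝ) * ((i:ℝ)+1) := by
        exact_mod_cast h
      have hi : ((i:ℝ)+1) ≠ 0 := by positivity
      have hn1 : ((n:ℝ)+1) ≠ 0 := by positivity
      field_simp
      linear_combination x ^ (i+1) * h'
    have e1 : ∑ i ∈ Finset.range (n+1), (n.choose (i+1):ℝ) * x ^ (i+1) / ((i:ℝ)+1)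
        = ∑ k ∈ Finset.range (n+1), (n.choose k : ℝ) * x ^ k / k := by
      rw [Finset.sum_range_succ]
      rw [Finset.sum_range_succ' (fun k => (n.choose k : ℝ) * x ^ k / (k:ℝ))]
      simp [Nat.choose_succ_self]
    have e2 : ∑ i ∈ Finset.range (n+1), (n.choose i :ℝ) * x ^ (i+1) / ((i:ℝ)+1)
        = ((1+x) ^ (n+1) - 1) / ((n:ℝ)+1) := by
      rw [Finset.sum_congr rfl (fun i _ => key i)]
      rw [← Finset.sum_div]
      congr 1
      have binom : (1+x) ^ (n+1) = ∑ k ∈ Finset.range (n+2), x ^ k * ((n+1).choose k : ℝ) := by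
        rw [add_comm 1 x, add_pow]
        exact Finset.sum_congr rfl (fun k _ => by ring)
      rw [binom, Finset.sum_range_succ' (fun k => x ^ k * ((n+1).choose k : ℝ))]
      simp [mul_comm]
    calc ∑ k ∈ Finset.range (n+2), ((n+1).choose k : ℝ) * x ^ k / k
        = ∑ i ∈ Finset.range (n+1), ((n+1).choose (i+1) : ℝ) * x ^ (i+1) / ((i:ℝ)+1) := by
          rw [Finset.sum_range_succ' (fun k => ((n+1).choose k : ℝ) * x ^ k / (k:ℝ))]
          push_cast
          simp
      _ = ∑ i ∈ Finset.range (n+1), ((n.choose (i+1):ℝ) * x ^ (i+1) / ((i:ℝ)+1)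
            + (n.choose i :ℝ) * x ^ (i+1) / ((i:ℝ)+1)) := by
          refine Finset.sum_congr rfl (fun i _ => ?_)
          rw [Nat.choose_succ_succ]
          push_cast
          ring
      _ = ∑ m ∈ Finset.range (n+2), ((1+x) ^ m - 1) / m := by
          rw [Finset.sum_add_distrib, e1, e2, ih,
            Finset.sum_range_succ (fun m => ((1+x) ^ m - 1) / (m:ℝ)) (n+1)]
          push_cast
          ring

lemma sumT (r : ℝ) (hr : 2 ≤ r) : ∀ n : ℕ, 5 ≤ n →
    ∑ m ∈ Finset.Icc 1 n, r ^ m / m ≤ r ^ (n+1) / ((r - 1) * ((n:ℝ) - 2)) := by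
  intro n hn
  induction n, hn using Nat.le_induction with
  | base =>
    have h5 : Finset.Icc 1 5 = ({1,2,3,4,5} : Finset ℕ) := by decide
    rw [h5]
    norm_num
    rw [le_div_iff₀ (by nlinarith : (0:ℝ) < (r - 1) * 3)]
    nlinarith [pow_pos (by linarith : (0:ℝ) < r) 5, pow_pos (by linarith : (0:ℝ) < r) 4,
      mul_nonneg (mul_nonneg (pow_pos (by linarith : (0:ℝ) < r) 4).le (by linarith : (0:ℝ) ≤ r - 2)) (by linarith : (0:ℝ) ≤ r - 2),
      mul_nonneg (pow_pos (by linarith : (0:ℝ) < r) 3).le (by linarith : (0:ℝ) ≤ r - 2),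
      mul_nonneg (pow_pos (by linarith : (0:ℝ) < r) 2).le (by linarith : (0:ℝ) ≤ r - 2)]
  | succ n hn ih =>
    rw [Finset.sum_Icc_succ_top (by omega : 1 ≤ n + 1)]
    have hm : (5:ℝ) ≤ (n:ℝ) := by exact_mod_cast hn
    have p1 : (0:ℝ) < r - 1 := by linarith
    have p2 : (0:ℝ) < (n:ℝ) - 2 := by linarith
    have p3 : (0:ℝ) < (n:ℝ) + 1 := by linarith
    have p4 : (0:ℝ) < (n:ℝ) - 1 := by linarith
    have hA : (0:ℝ) < r ^ (n+1) := pow_pos (by linarith) _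
    push_cast
    have step : r ^ (n+1) / ((r - 1) * ((n:ℝ) - 2)) + r ^ (n+1) / ((n:ℝ)+1)
        ≤ r ^ (n+1+1) / ((r - 1) * ((n:ℝ) + 1 - 2)) := by
      have hpow : r ^ (n+1+1) = r ^ (n+1) * r := by ring
      rw [hpow, div_add_div _ _ (ne_of_gt (mul_pos p1 p2)) (ne_of_gt p3),
        div_le_div_iff₀ (mul_pos (mul_pos p1 p2) p3) (by nlinarith : (0:ℝ) < (r - 1) * ((n:ℝ) + 1 - 2))]
      have key : (0:ℝ) ≤ 2*r*((n:ℝ)-2) - 3*((n:ℝ)-1) := by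
        nlinarith [mul_nonneg (by linarith : (0:ℝ) ≤ r-2) p2.le]
      nlinarith [mul_nonneg (mul_nonneg hA.le p1.le) key, mul_pos hA p1,
        mul_pos (mul_pos hA p1) p2, mul_pos (mul_pos hA p1) p3]
    calc ∑ m ∈ Finset.Icc 1 n, r ^ m / m + r ^ (n+1) / ((n:ℝ)+1)
        ≤ r ^ (n+1) / ((r - 1) * ((n:ℝ) - 2)) + r ^ (n+1) / ((n:ℝ)+1) := by
          gcongr
      _ ≤ r ^ (n+1+1) / ((r - 1) * ((n:ℝ) + 1 - 2)) := step

theorem stmt_0 (q n : ℕ) (hq : 2 ≤ q) (hn : 5 ≤ n) (hnq : q ≤ n) :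
    ∑ k ∈ Finset.Icc 1 n, (n.choose k : ℝ) * ((q : ℝ) - 1) ^ k / k ≤
      (q : ℝ) ^ (n + 1) / (((q : ℝ) - 1) * ((n : ℝ) - 2)) := by
  have hq' : (2:ℝ) ≤ (q:ℝ) := by exact_mod_cast hq
  have hins : Finset.range (n+1) = insert 0 (Finset.Icc 1 n) := by
    ext k; simp; omega
  have h1x : 1 + ((q:ℝ) - 1) = (q:ℝ) := by ring
  have hL : ∑ k ∈ Finset.Icc 1 n, (n.choose k : ℝ) * ((q : ℝ) - 1) ^ k / k
      = ∑ m ∈ Finset.Icc 1 n, ((q:ℝ) ^ m - 1) / m := by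
    have lhs0 : ∑ k ∈ Finset.range (n+1), (n.choose k : ℝ) * ((q : ℝ) - 1) ^ k / k
        = ∑ k ∈ Finset.Icc 1 n, (n.choose k : ℝ) * ((q : ℝ) - 1) ^ k / k := by
      rw [hins, Finset.sum_insert (by simp)]
      simp
    have rhs0 : ∑ m ∈ Finset.range (n+1), ((q:ℝ) ^ m - 1) / m
        = ∑ m ∈ Finset.Icc 1 n, ((q:ℝ) ^ m - 1) / m := by
      rw [hins, Finset.sum_insert (by simp)]
      simp
    rw [← lhs0, ← rhs0, ident_aux]
    rw [h1x]
  rw [hL]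
  calc ∑ m ∈ Finset.Icc 1 n, ((q:ℝ) ^ m - 1) / m
      ≤ ∑ m ∈ Finset.Icc 1 n, (q:ℝ) ^ m / m := by
        refine Finset.sum_le_sum (fun m hm => ?_)
        have hm1 : 1 ≤ m := (Finset.mem_Icc.mp hm).1
        have : (0:ℝ) < (m:ℝ) := by exact_mod_cast hm1
        gcongr
        linarith
    _ ≤ (q : ℝ) ^ (n + 1) / (((q : ℝ) - 1) * ((n : ℝ) - 2)) := sumT (q:ℝ) hq' n hn
end

section
/- For integers n ≥ 2 and q ≥ 1, the identity ∑_{k=1}^{n} C(n,k) * (q-1)^k / k = ∑_{j=1}^{n} (q^j - 1)/j holds. -/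
lemma aux (x : ℚ) (n : ℕ) :
    ∑ k ∈ Finset.Icc 1 n, (n.choose k : ℚ) * x ^ k / k =
      ∑ j ∈ Finset.Icc 1 n, ((x + 1) ^ j - 1) / j := by
  induction n with
  | zero => simp
  | succ n ih =>
    have hsplit : ∀ k ∈ Finset.Icc 1 (n+1),
        ((n+1).choose k : ℚ) * x ^ k / k
          = (n.choose k : ℚ) * x ^ k / k + (n.choose (k-1) : ℚ) * x ^ k / k := by
      intro k hk
      simp only [Finset.mem_Icc] at hk
      obtain ⟨m, rfl⟩ : ∃ m, k = m + 1 := ⟨k - 1, by omega⟩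
      rw [Nat.choose_succ_succ]
      push_cast
      ring
    rw [Finset.sum_congr rfl hsplit, Finset.sum_add_distrib]
    have h1 : ∑ k ∈ Finset.Icc 1 (n+1), (n.choose k : ℚ) * x ^ k / k
        = ∑ k ∈ Finset.Icc 1 n, (n.choose k : ℚ) * x ^ k / k := by
      rw [Finset.sum_Icc_succ_top (by omega)]
      simp [Nat.choose_succ_self]
    have h2 : ∑ k ∈ Finset.Icc 1 (n+1), (n.choose (k-1) : ℚ) * x ^ k / k
        = ((x + 1) ^ (n+1) - 1) / (n+1) := by
      have hterm : ∀ k ∈ Finset.Icc 1 (n+1),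
          (n.choose (k-1) : ℚ) * x ^ k / k
            = ((n+1).choose k : ℚ) * x ^ k / (n+1) := by
        intro k hk
        simp only [Finset.mem_Icc] at hk
        obtain ⟨m, rfl⟩ : ∃ m, k = m + 1 := ⟨k - 1, by omega⟩
        have h := Nat.add_one_mul_choose_eq n m
        have hq : ((n+1 : ℕ) : ℚ) * (n.choose m : ℚ) = ((n+1).choose (m+1) : ℚ) * (m+1 : ℕ) := by
          exact_mod_cast congrArg (Nat.cast : ℕ → ℚ) h
        push_cast at hq ⊢
        field_simp
        linear_combination x ^ (m + 1) * hq
      rw [Finset.sum_congr rfl hterm]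
      have hbin : (x + 1) ^ (n+1)
          = ∑ k ∈ Finset.range (n+2), x ^ k * ((n+1).choose k : ℚ) := by
        rw [add_pow]
        simp
      have hrange : ∑ k ∈ Finset.range (n+2), x ^ k * ((n+1).choose k : ℚ)
          = 1 + ∑ k ∈ Finset.Icc 1 (n+1), x ^ k * ((n+1).choose k : ℚ) := by
        rw [Finset.sum_range_succ' (fun k => x ^ k * ((n+1).choose k : ℚ)) (n+1)]
        rw [← Finset.Ico_add_one_right_eq_Icc, Finset.sum_Ico_eq_sum_range]
        simp [add_comm]
      have : ∑ k ∈ Finset.Icc 1 (n+1), x ^ k * ((n+1).choose k : ℚ)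
          = (x + 1) ^ (n+1) - 1 := by
        rw [hbin, hrange]; ring
      rw [← Finset.sum_div, ← this]
      congr 1
      exact Finset.sum_congr rfl (fun k _ => by ring)
    rw [h1, h2, ih, Finset.sum_Icc_succ_top (by omega : 1 ≤ n + 1)]
    push_cast
    ring

theorem stmt_1 (n q : ℕ) (hn : 2 ≤ n) (hq : 1 ≤ q) :
    ∑ k ∈ Finset.Icc 1 n, (n.choose k : ℚ) * ((q : ℚ) - 1) ^ k / k =
      ∑ j ∈ Finset.Icc 1 n, ((q : ℚ) ^ j - 1) / j := by
  have := aux ((q : ℚ) - 1) n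
  simpa using this
end

section
/- Let x be a word of length n over an alphabet of size q ≥ 2 and y be any word obtained from x by one deletion followed by at most s substitutions. Then r(x) - (2 + 2s) ≤ r(y) ≤ r(x) + 2s, where r(w) denotes the number of maximal runs of w. -/
/-- Word obtained from `x` by deleting the symbol at position `d`. -/
def delAt {α : Type*} {n : ℕ} (x : Fin (n + 1) → α) (d : Fin (n + 1)) : Fin n → α :=
  x ∘ d.succAbove

/-- The set of words obtainable from `x` by one deletion followed by at most `s` substitutions. -/
def ballDS {q n : ℕ} (s : ℕ) (x : Fin (n + 1) → Fin q) : Set (Fin n → Fin q) :=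
  { y | ∃ d : Fin (n + 1), hammingDist (delAt x d) y ≤ s }

/-- Number of maximal runs of a (nonempty) word. -/
def runs {α : Type*} {n : ℕ} [DecidableEq α] (x : Fin (n + 1) → α) : ℕ :=
  1 + (Finset.univ.filter fun i : Fin n => x i.castSucc ≠ x i.succ).card

open Finset

/-- Number of "boundaries" among the first `m+1` values of `X`. -/
def cnt {α : Type*} [DecidableEq α] (X : ℕ → α) (m : ℕ) : ℕ :=
  ∑ i ∈ Finset.range m, if X i ≠ X (i + 1) then 1 else 0

lemma cnt_succ {α : Type*} [DecidableEq α] (X : ℕ → α) (m : ℕ) :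
    cnt X (m + 1) = (if X 0 ≠ X 1 then 1 else 0) + cnt (fun i => X (i + 1)) m := by
  unfold cnt
  rw [Finset.sum_range_succ']
  ring

lemma cnt_le_one {α : Type*} [DecidableEq α] (X : ℕ → α) :
    cnt X (0 + 1) ≤ 1 := by
  unfold cnt
  rw [Finset.sum_range_succ, Finset.sum_range_zero]
  split <;> omega

lemma del_bounds {α : Type*} [DecidableEq α] :
    ∀ (n : ℕ) (X : ℕ → α) (dv : ℕ),
      cnt (fun i => X (if i < dv then i else i + 1)) n ≤ cnt X (n + 1) ∧
      cnt X (n + 1) ≤ cnt (fun i => X (if i < dv then i else i + 1)) n + 2 := by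
  intro n
  induction n with
  | zero =>
    intro X dv
    have h0 : cnt (fun i => X (if i < dv then i else i + 1)) 0 = 0 := by
      simp [cnt]
    have h1 := cnt_le_one X
    omega
  | succ n ih =>
    intro X dv
    match dv with
    | 0 =>
      have hZ : (fun i => X (if i < 0 then i else i + 1)) = fun i => X (i + 1) := by
        funext i; simp
      rw [hZ, cnt_succ X (n + 1)]
      constructor
      · omega
      · split <;> omega
    | 1 =>
      have hXeq : cnt X (n + 2) = ((if X 0 ≠ X 1 then 1 else 0)
          + (if X 1 ≠ X 2 then 1 else 0)) + cnt (fun i => X (i + 2)) n := by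
        rw [cnt_succ, cnt_succ]
        have h : (fun i => X (i + 1 + 1)) = fun i => X (i + 2) := by
          funext i; norm_num
        norm_num [h]
        ring
      have hZeq : cnt (fun i => X (if i < 1 then i else i + 1)) (n + 1)
          = (if X 0 ≠ X 2 then 1 else 0) + cnt (fun i => X (i + 2)) n := by
        rw [cnt_succ]
        have h : (fun i => X (if i + 1 < 1 then i + 1 else i + 1 + 1))
            = fun i => X (i + 2) := by
          funext i; rw [if_neg (by omega)]
        norm_num [h]
      rw [hXeq, hZeq]
      have key : (if X 0 ≠ X 2 then 1 else 0) ≤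
          (if X 0 ≠ X 1 then 1 else 0) + (if X 1 ≠ X 2 then 1 else 0) := by
        have bb : (if X 0 ≠ X 2 then 1 else 0) ≤ 1 := by split <;> omega
        by_cases hB : X 0 = X 1
        · by_cases hC : X 1 = X 2
          · rw [if_neg (not_not_intro (hB.trans hC))]
            omega
          · rw [if_pos hC]
            omega
        · rw [if_pos hB]
          omega
      have b1 : (if X 0 ≠ X 1 then 1 else 0) ≤ 1 := by split <;> omega
      have b2 : (if X 1 ≠ X 2 then 1 else 0) ≤ 1 := by split <;> omega
      omega
    | (dw + 2) =>
      have hXeq : cnt X (n + 2) = (if X 0 ≠ X 1 then 1 else 0)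
          + cnt (fun i => X (i + 1)) (n + 1) := cnt_succ X (n + 1)
      have hZeq : cnt (fun i => X (if i < dw + 2 then i else i + 1)) (n + 1)
          = (if X 0 ≠ X 1 then 1 else 0)
            + cnt (fun i => X ((if i < dw + 1 then i else i + 1) + 1)) n := by
        rw [cnt_succ]
        have h : (fun i => X (if i + 1 < dw + 2 then i + 1 else i + 1 + 1))
            = fun i => X ((if i < dw + 1 then i else i + 1) + 1) := by
          funext i; congr 1; split_ifs <;> omega
        rw [h, if_pos (by omega : (0:ℕ) < dw + 2), if_pos (by omega : (1:ℕ) < dw + 2)]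
      have ihl : cnt (fun i => X ((if i < dw + 1 then i else i + 1) + 1)) n
          ≤ cnt (fun i => X (i + 1)) (n + 1) := (ih (fun j => X (j + 1)) (dw + 1)).1
      have ihr : cnt (fun i => X (i + 1)) (n + 1)
          ≤ cnt (fun i => X ((if i < dw + 1 then i else i + 1) + 1)) n + 2 :=
        (ih (fun j => X (j + 1)) (dw + 1)).2
      rw [hXeq, hZeq]
      omega

/-- Bridge between the `Fin`-indexed boundary count and `cnt`. -/
lemma card_eq_cnt {α : Type*} [DecidableEq α] {m : ℕ} (w : Fin (m + 1) → α) (W : ℕ → α)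
    (hw : ∀ i : Fin (m + 1), w i = W i.val) :
    (Finset.univ.filter fun i : Fin m => w i.castSucc ≠ w i.succ).card = cnt W m := by
  unfold cnt
  rw [Finset.card_filter]
  rw [← Fin.sum_univ_eq_sum_range (fun i => if W i ≠ W (i + 1) then 1 else 0) m]
  apply Finset.sum_congr rfl
  intro i _
  rw [hw i.castSucc, hw i.succ]
  simp [Fin.coe_castSucc, Fin.val_succ]

/-- One-sided substitution bound on the number of boundaries. -/
lemma sub_le {α : Type*} [DecidableEq α] {n : ℕ} (z y : Fin (n + 1) → α) :
    (Finset.univ.filter fun i : Fin n => y i.castSucc ≠ y i.succ).card ≤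
      (Finset.univ.filter fun i : Fin n => z i.castSucc ≠ z i.succ).card
        + 2 * hammingDist z y := by
  classical
  set D : Finset (Fin (n + 1)) := Finset.univ.filter fun j => z j ≠ y j with hD
  have hDcard : hammingDist z y = D.card := rfl
  have hsub : (Finset.univ.filter fun i : Fin n => y i.castSucc ≠ y i.succ) ⊆
      ((Finset.univ.filter fun i : Fin n => z i.castSucc ≠ z i.succ) ∪
        (Finset.univ.filter fun i : Fin n => i.castSucc ∈ D)) ∪
        (Finset.univ.filter fun i : Fin n => i.succ ∈ D) := by
    intro i hi
    simp only [Finset.mem_filter, Finset.mem_univ, true_and, Finset.mem_union, hD] at *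
    by_cases h1 : z i.castSucc = y i.castSucc
    · by_cases h2 : z i.succ = y i.succ
      · left; left; rw [h1, h2]; exact hi
      · right; exact h2
    · left; right; exact h1
  have c1 : (Finset.univ.filter fun i : Fin n => i.castSucc ∈ D).card ≤ D.card := by
    apply Finset.card_le_card_of_injOn Fin.castSucc
    · intro a ha; simpa using (Finset.mem_filter.mp ha).2
    · exact (Fin.castSucc_injective n).injOn
  have c2 : (Finset.univ.filter fun i : Fin n => i.succ ∈ D).card ≤ D.card := by
    apply Finset.card_le_card_of_injOn Fin.succ
    · intro a ha; simpa using (Finset.mem_filter.mp ha).2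
    · exact (Fin.succ_injective n).injOn
  calc (Finset.univ.filter fun i : Fin n => y i.castSucc ≠ y i.succ).card
      ≤ (((Finset.univ.filter fun i : Fin n => z i.castSucc ≠ z i.succ) ∪
          (Finset.univ.filter fun i : Fin n => i.castSucc ∈ D)) ∪
          (Finset.univ.filter fun i : Fin n => i.succ ∈ D)).card :=
        Finset.card_le_card hsub
    _ ≤ ((Finset.univ.filter fun i : Fin n => z i.castSucc ≠ z i.succ) ∪
          (Finset.univ.filter fun i : Fin n => i.castSucc ∈ D)).card
          + (Finset.univ.filter fun i : Fin n => i.succ ∈ D).card :=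
        Finset.card_union_le _ _
    _ ≤ (Finset.univ.filter fun i : Fin n => z i.castSucc ≠ z i.succ).card
          + (Finset.univ.filter fun i : Fin n => i.castSucc ∈ D).card
          + (Finset.univ.filter fun i : Fin n => i.succ ∈ D).card := by
        have := Finset.card_union_le
          (Finset.univ.filter fun i : Fin n => z i.castSucc ≠ z i.succ)
          (Finset.univ.filter fun i : Fin n => i.castSucc ∈ D)
        omega
    _ ≤ (Finset.univ.filter fun i : Fin n => z i.castSucc ≠ z i.succ).card
          + 2 * hammingDist z y := by rw [hDcard]; omega

theorem stmt_2 (q n s : ℕ) (x : Fin (n + 2) → Fin q) (y : Fin (n + 1) → Fin q)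
    (hy : y ∈ ballDS s x) :
    (runs x : ℤ) - (2 + 2 * s) ≤ (runs y : ℤ) ∧ (runs y : ℤ) ≤ (runs x : ℤ) + 2 * s := by
  classical
  obtain ⟨d, hd⟩ := hy
  set z : Fin (n + 1) → Fin q := delAt x d with hz
  -- substitution bounds
  have hsub1 : (Finset.univ.filter fun i : Fin n => y i.castSucc ≠ y i.succ).card ≤
      (Finset.univ.filter fun i : Fin n => z i.castSucc ≠ z i.succ).card
        + 2 * hammingDist z y := sub_le z y
  have hsub2 : (Finset.univ.filter fun i : Fin n => z i.castSucc ≠ z i.succ).card ≤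
      (Finset.univ.filter fun i : Fin n => y i.castSucc ≠ y i.succ).card
        + 2 * hammingDist z y := by
    have := sub_le y z
    rwa [hammingDist_comm y z] at this
  -- deletion bounds via ℕ-indexed words
  set X : ℕ → Fin q := fun i => x ⟨min i (n + 1), by omega⟩ with hX
  set dv : ℕ := d.val with hdv
  set Z : ℕ → Fin q := fun i => X (if i < dv then i else i + 1) with hZ
  have hvsA : ∀ i : Fin (n + 1), ((d.succAbove i : Fin (n + 2)) : ℕ)
      = if (i : ℕ) < dv then (i : ℕ) else (i : ℕ) + 1 := by
    intro i
    rcases lt_or_ge (i : ℕ) dv with h | h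
    · rw [Fin.succAbove_of_castSucc_lt]
      · simp [if_pos h]
      · simpa [Fin.lt_def] using h
    · rw [Fin.succAbove_of_le_castSucc]
      · rw [if_neg (by omega)]
        simp [Fin.val_succ]
      · simpa [Fin.le_def] using h
  have hbx : (Finset.univ.filter fun i : Fin (n + 1) => x i.castSucc ≠ x i.succ).card
      = cnt X (n + 1) := by
    apply card_eq_cnt
    intro i
    show x i = x ⟨min (i : ℕ) (n + 1), by omega⟩
    congr 1
    apply Fin.ext
    exact (Nat.min_eq_left (by have := i.isLt; omega : (i : ℕ) ≤ n + 1)).symm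
  have hbz : (Finset.univ.filter fun i : Fin n => z i.castSucc ≠ z i.succ).card
      = cnt Z n := by
    apply card_eq_cnt
    intro i
    show x (d.succAbove i) = X (if (i : ℕ) < dv then (i : ℕ) else (i : ℕ) + 1)
    have hc : (if (i : ℕ) < dv then (i : ℕ) else (i : ℕ) + 1) ≤ n + 1 := by
      have := i.isLt; split_ifs <;> omega
    show x (d.succAbove i) =
      x ⟨min (if (i : ℕ) < dv then (i : ℕ) else (i : ℕ) + 1) (n + 1), by omega⟩
    congr 1
    apply Fin.ext
    show ((d.succAbove i : Fin (n + 2)) : ℕ)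
      = min (if (i : ℕ) < dv then (i : ℕ) else (i : ℕ) + 1) (n + 1)
    rw [Nat.min_eq_left hc]
    exact hvsA i
  obtain ⟨hd1, hd2⟩ := del_bounds n X dv
  have e1 : runs x = 1 + (Finset.univ.filter fun i : Fin (n + 1) =>
      x i.castSucc ≠ x i.succ).card := rfl
  have e2 : runs y = 1 + (Finset.univ.filter fun i : Fin n =>
      y i.castSucc ≠ y i.succ).card := rfl
  have hd1' : cnt Z n ≤ cnt X (n + 1) := hd1
  have hd2' : cnt X (n + 1) ≤ cnt Z n + 2 := hd2
  omega
end

section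
/- For a word x of length n over an alphabet of size q ≥ 2 with r(x) ≥ 2 runs, the number of distinct words obtainable from x by one deletion and at most one substitution equals r(x)·[(n-3)(q-1) + (q-2)] + (q+2). -/
open Finset

section Ham
variable {q n : ℕ}

def ballF (z : Fin n → Fin q) : Finset (Fin n → Fin q) :=
  Finset.univ.filter fun y => hammingDist z y ≤ 1

lemma hd_eq (z y : Fin n → Fin q) :
    hammingDist z y = (Finset.univ.filter fun i => z i ≠ y i).card := rfl

lemma mem_ballF {z y : Fin n → Fin q} : y ∈ ballF z ↔ hammingDist z y ≤ 1 := by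
  simp [ballF]

lemma agree_off {z y : Fin n → Fin q} {t : Fin n} (h : hammingDist z y ≤ 1)
    (ht : z t ≠ y t) {i : Fin n} (hi : i ≠ t) : z i = y i := by
  by_contra hzi
  have hsub : ({i, t} : Finset (Fin n)) ⊆ Finset.univ.filter (fun j => z j ≠ y j) := by
    intro j hj
    simp only [mem_insert, mem_singleton] at hj
    rcases hj with rfl | rfl <;> simp [hzi, ht]
  have h2 := Finset.card_le_card hsub
  rw [Finset.card_pair hi] at h2
  rw [hd_eq] at h
  omega

lemma dist_le_one_of {z y : Fin n → Fin q} (p : Fin n) (hp : ∀ i, i ≠ p → z i = y i) :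
    hammingDist z y ≤ 1 := by
  rw [hd_eq]
  have hsub : (Finset.univ.filter fun i => z i ≠ y i) ⊆ {p} := by
    intro i hi
    simp only [mem_filter] at hi
    simp only [mem_singleton]
    by_contra hip
    exact hi.2 (hp i hip)
  simpa using Finset.card_le_card hsub

lemma exists_of_dist_one {z w : Fin n → Fin q} (h : hammingDist z w = 1) :
    ∃ p, z p ≠ w p ∧ ∀ i, i ≠ p → z i = w i := by
  rw [hd_eq] at h
  obtain ⟨p, hp⟩ := Finset.card_eq_one.mp h
  refine ⟨p, ?_, ?_⟩
  · have : p ∈ (Finset.univ.filter fun i => z i ≠ w i) := hp ▸ Finset.mem_singleton_self p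
    simpa using this
  · intro i hi
    by_contra hzi
    have : i ∈ (Finset.univ.filter fun i => z i ≠ w i) := by simp [hzi]
    rw [hp] at this
    simp at this
    exact hi this

lemma exists_of_dist_two {z w : Fin n → Fin q} (h : hammingDist z w = 2) :
    ∃ p p', p ≠ p' ∧ z p ≠ w p ∧ z p' ≠ w p' ∧ ∀ i, i ≠ p → i ≠ p' → z i = w i := by
  rw [hd_eq] at h
  obtain ⟨p, p', hpp, hset⟩ := Finset.card_eq_two.mp h
  have hp : z p ≠ w p := by
    have : p ∈ (Finset.univ.filter fun i => z i ≠ w i) := by rw [hset]; simp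
    simpa using this
  have hp' : z p' ≠ w p' := by
    have : p' ∈ (Finset.univ.filter fun i => z i ≠ w i) := by rw [hset]; simp
    simpa using this
  refine ⟨p, p', hpp, hp, hp', fun i hi hi' => ?_⟩
  by_contra hzi
  have : i ∈ (Finset.univ.filter fun i => z i ≠ w i) := by simp [hzi]
  rw [hset] at this
  simp only [mem_insert, mem_singleton] at this
  tauto

lemma card_ballF (hq : 1 ≤ q) (z : Fin n → Fin q) : (ballF z).card = 1 + n * (q - 1) := by
  classical
  have hrepr : ballF z = insert z
      (((Finset.univ : Finset (Fin n × Fin q)).filter fun p => p.2 ≠ z p.1).image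
        fun p => Function.update z p.1 p.2) := by
    ext y
    simp only [mem_ballF, mem_insert, mem_image, mem_filter, mem_univ, true_and]
    constructor
    · intro hy
      by_cases hyz : y = z
      · exact Or.inl hyz
      · right
        have : ∃ t, z t ≠ y t := by
          by_contra hc
          push_neg at hc
          exact hyz (funext fun i => (hc i).symm)
        obtain ⟨t, ht⟩ := this
        refine ⟨(t, y t), ht.symm, ?_⟩
        funext i
        by_cases hit : i = t
        · subst hit; simp
        · rw [Function.update_of_ne hit]
          exact agree_off hy ht hit
    · rintro (rfl | ⟨⟨i, a⟩, ha, rfl⟩)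
      · simp [hammingDist_self]
      · exact dist_le_one_of i fun j hj => by rw [Function.update_of_ne hj]
  rw [hrepr]
  have hnotmem : z ∉ (((Finset.univ : Finset (Fin n × Fin q)).filter fun p => p.2 ≠ z p.1).image
      fun p => Function.update z p.1 p.2) := by
    simp only [mem_image, mem_filter, mem_univ, true_and]
    rintro ⟨⟨i, a⟩, ha, hupd⟩
    apply ha
    have := congrFun hupd i
    simpa using this
  rw [Finset.card_insert_of_notMem hnotmem]
  have hinj : Set.InjOn (fun p : Fin n × Fin q => Function.update z p.1 p.2)
      ↑((Finset.univ : Finset (Fin n × Fin q)).filter fun p => p.2 ≠ z p.1) := by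
    rintro ⟨i, a⟩ hia ⟨j, b⟩ hjb hupd
    simp only [coe_filter, Set.mem_setOf_eq] at hia hjb
    have hij : i = j := by
      by_contra hij
      have h1 := congrFun hupd i
      simp [Function.update_of_ne (Ne.symm hij), hij] at h1
      exact hia.2 h1
    subst hij
    have := congrFun hupd i
    simp at this
    simp [this]
  rw [Finset.card_image_of_injOn hinj]
  have hcard : ((Finset.univ : Finset (Fin n × Fin q)).filter fun p => p.2 ≠ z p.1).card
      = n * (q - 1) := by
    have hsplit := Finset.card_filter_add_card_filter_not
      (s := (Finset.univ : Finset (Fin n × Fin q))) (p := fun p => p.2 = z p.1)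
    have heqcard : ((Finset.univ : Finset (Fin n × Fin q)).filter fun p => p.2 = z p.1).card = n := by
      have : ((Finset.univ : Finset (Fin n × Fin q)).filter fun p => p.2 = z p.1)
          = (Finset.univ : Finset (Fin n)).image fun i => (i, z i) := by
        ext ⟨i, a⟩
        simp only [mem_filter, mem_univ, true_and, mem_image]
        constructor
        · rintro rfl; exact ⟨i, rfl⟩
        · rintro ⟨j, hj⟩; rw [Prod.ext_iff] at hj; obtain ⟨h1, h2⟩ := hj
          simp only at h1 h2; subst h1; exact h2.symm
      rw [this, Finset.card_image_of_injective _ (fun i j h => (Prod.ext_iff.mp h).1),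
        Finset.card_univ, Fintype.card_fin]
    have huniv : ((Finset.univ : Finset (Fin n × Fin q))).card = n * q := by
      simp [Finset.card_univ]
    obtain ⟨Q, rfl⟩ : ∃ Q, q = Q + 1 := ⟨q - 1, by omega⟩
    have hmul : n * (Q + 1) = n * Q + n := by ring
    simp only [Nat.add_sub_cancel]
    have : (filter (fun p : Fin n × Fin (Q+1) => ¬p.2 = z p.1) Finset.univ).card
        = (filter (fun p : Fin n × Fin (Q+1) => p.2 ≠ z p.1) Finset.univ).card := rfl
    omega
  omega

lemma card_inter_dist_one {z w : Fin n → Fin q} (h : hammingDist z w = 1) :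
    (ballF z ∩ ballF w).card = q := by
  classical
  obtain ⟨p, hp, hoff⟩ := exists_of_dist_one h
  have hrepr : ballF z ∩ ballF w = (Finset.univ : Finset (Fin q)).image fun a => Function.update z p a := by
    ext y
    simp only [mem_inter, mem_ballF, mem_image, mem_univ, true_and]
    constructor
    · rintro ⟨h1, h2⟩
      refine ⟨y p, ?_⟩
      funext i
      by_cases hip : i = p
      · rw [hip]; simp
      · rw [Function.update_of_ne hip]
        by_contra hzi
        have hzi' : z i ≠ y i := hzi
        have hall := fun j (hj : j ≠ i) => agree_off h1 hzi' hj
        have hyp : z p = y p := hall p (fun hc => hip hc.symm)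
        have hwi : w i ≠ y i := by rw [← hoff i hip]; exact hzi'
        have hwp : w p ≠ y p := by rw [← hyp]; exact fun hc => hp hc.symm
        have := agree_off h2 hwi (fun hc : p = i => hip hc.symm)
        exact hwp this
    · rintro ⟨a, rfl⟩
      constructor
      · exact dist_le_one_of p fun j hj => by rw [Function.update_of_ne hj]
      · exact dist_le_one_of p fun j hj => by rw [Function.update_of_ne hj, ← hoff j hj]
  rw [hrepr, Finset.card_image_of_injective _ (Function.update_injective z p)]
  simp

lemma inter_dist_two_eq {z v : Fin n → Fin q} (h : hammingDist z v = 2) :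
    ∃ u1 u2 : Fin n → Fin q, hammingDist u1 u2 = 2 ∧
      ballF z ∩ ballF v = {u1, u2} := by
  classical
  obtain ⟨p, p', hpp, hp, hp', hoff⟩ := exists_of_dist_two h
  refine ⟨Function.update z p (v p), Function.update z p' (v p'), ?_, ?_⟩
  · rw [hd_eq]
    have hset : (Finset.univ.filter fun i =>
        Function.update z p (v p) i ≠ Function.update z p' (v p') i) = {p, p'} := by
      ext i
      simp only [mem_filter, mem_univ, true_and, mem_insert, mem_singleton]
      by_cases hip : i = p
      · rw [hip, Function.update_self, Function.update_of_ne hpp]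
        exact iff_of_true (fun hc => hp hc.symm) (Or.inl rfl)
      · by_cases hip' : i = p'
        · rw [hip', Function.update_of_ne (fun hc : p' = p => hpp hc.symm),
            Function.update_self]
          exact iff_of_true hp' (Or.inr rfl)
        · rw [Function.update_of_ne hip, Function.update_of_ne hip']
          exact iff_of_false (fun hc => hc rfl) (by tauto)
    rw [hset, Finset.card_pair hpp]
  · ext y
    simp only [mem_inter, mem_ballF, mem_insert, mem_singleton]
    constructor
    · rintro ⟨h1, h2⟩
      have hagree : ∀ i, i ≠ p → i ≠ p' → y i = z i := by
        intro t htp htp'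
        by_contra hyt
        have hzt : z t ≠ y t := fun hc => hyt hc.symm
        have hall := fun j (hj : j ≠ t) => agree_off h1 hzt hj
        have h3 : v p ≠ y p := by
          rw [← hall p (fun hc => htp hc.symm)]
          exact fun hc => hp hc.symm
        have h4 : v p' ≠ y p' := by
          rw [← hall p' (fun hc => htp' hc.symm)]
          exact fun hc => hp' hc.symm
        exact h4 (agree_off h2 h3 (fun hc : p' = p => hpp hc.symm))
      by_cases hyp : y p = z p
      · right
        have hvp : v p ≠ y p := by rw [hyp]; exact fun hc => hp hc.symm
        have hall := fun j (hj : j ≠ p) => agree_off h2 hvp hj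
        funext i
        by_cases hip' : i = p'
        · rw [hip', Function.update_self]
          exact (hall p' (fun hc : p' = p => hpp hc.symm)).symm
        · rw [Function.update_of_ne hip']
          by_cases hip : i = p
          · rw [hip]; exact hyp
          · exact hagree i hip hip'
      · left
        have hzp : z p ≠ y p := fun hc => hyp hc.symm
        have hall := fun j (hj : j ≠ p) => agree_off h1 hzp hj
        have hyp' : y p' = z p' := (hall p' (fun hc : p' = p => hpp hc.symm)).symm
        have hvp' : v p' ≠ y p' := by rw [hyp']; exact fun hc => hp' hc.symm
        have hall2 := fun j (hj : j ≠ p') => agree_off h2 hvp' hj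
        funext i
        by_cases hip : i = p
        · rw [hip, Function.update_self]
          exact (hall2 p hpp).symm
        · rw [Function.update_of_ne hip]
          by_cases hip' : i = p'
          · rw [hip']; exact hyp'
          · exact hagree i hip hip'
    · rintro (rfl | rfl)
      · constructor
        · exact dist_le_one_of p fun j hj => by rw [Function.update_of_ne hj]
        · refine dist_le_one_of p' fun j hj => ?_
          by_cases hjp : j = p
          · rw [hjp]; simp
          · rw [Function.update_of_ne hjp]; exact (hoff j hjp hj).symm
      · constructor
        · exact dist_le_one_of p' fun j hj => by rw [Function.update_of_ne hj]
        · refine dist_le_one_of p fun j hj => ?_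
          by_cases hjp : j = p'
          · rw [hjp]; simp
          · rw [Function.update_of_ne hjp]; exact (hoff j hj hjp).symm

lemma card_inter_dist_two {z v : Fin n → Fin q} (h : hammingDist z v = 2) :
    (ballF z ∩ ballF v).card = 2 := by
  obtain ⟨u1, u2, hd12, heq⟩ := inter_dist_two_eq h
  have : u1 ≠ u2 := by
    intro hc; rw [hc, hammingDist_self] at hd12; omega
  rw [heq, Finset.card_pair this]

lemma inter_empty_dist_ge_three {z v : Fin n → Fin q} (h : 3 ≤ hammingDist z v) :
    ballF z ∩ ballF v = ∅ := by
  ext y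
  simp only [mem_inter, mem_ballF, notMem_empty, iff_false, not_and]
  intro h1 h2
  have htri := hammingDist_triangle z y v
  rw [hammingDist_comm v y] at h2
  omega

lemma inter_three {z w v : Fin n → Fin q} (hzw : hammingDist z w = 1)
    (hwv : hammingDist w v = 1) (hzv : hammingDist z v = 2) :
    ballF z ∩ ballF w ∩ ballF v = {w} := by
  obtain ⟨u1, u2, hd12, heq⟩ := inter_dist_two_eq hzv
  have hwmem : w ∈ ballF z ∩ ballF v := by
    simp only [mem_inter, mem_ballF]
    refine ⟨le_of_eq hzw, ?_⟩
    rw [hammingDist_comm]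
    exact le_of_eq hwv
  ext y
  simp only [mem_inter, mem_ballF, mem_singleton]
  constructor
  · rintro ⟨⟨h1, h2⟩, h3⟩
    have hymem : y ∈ ballF z ∩ ballF v := by
      simp only [mem_inter, mem_ballF]; exact ⟨h1, h3⟩
    rw [heq] at hwmem hymem
    simp only [mem_insert, mem_singleton] at hwmem hymem
    by_contra hyw
    have hdyw : hammingDist w y ≤ 1 := h2
    rcases hymem with rfl | rfl <;> rcases hwmem with rfl | rfl
    all_goals first
      | exact hyw rfl
      | omega
      | (rw [hammingDist_comm w y] at hdyw; omega)
      | (rw [hammingDist_comm y w] at hdyw; omega)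
  · rintro rfl
    refine ⟨⟨le_of_eq hzw, ?_⟩, ?_⟩
    · simp [hammingDist_self]
    · rw [hammingDist_comm]; exact le_of_eq hwv

/-- Union of the first `m` balls. -/
def UB (zz : ℕ → Fin n → Fin q) (m : ℕ) : Finset (Fin n → Fin q) :=
  (Finset.range m).biUnion fun j => ballF (zz j)

lemma card_UB (hq : 1 ≤ q) (zz : ℕ → Fin n → Fin q) (m : ℕ)
    (hd : ∀ j k, j ≤ k → k < m + 2 → hammingDist (zz j) (zz k) = k - j) :
    (UB zz (m + 2)).card + (m + 1) * (q + 1) = (m + 2) * (1 + n * (q - 1)) + 1 := by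
  classical
  induction m with
  | zero =>
    have h01 : hammingDist (zz 0) (zz 1) = 1 := hd 0 1 (by omega) (by omega)
    have hU : UB zz 2 = ballF (zz 0) ∪ ballF (zz 1) := by
      ext y
      simp only [UB, mem_biUnion, mem_range, mem_union]
      constructor
      · rintro ⟨j, hj, hyj⟩
        interval_cases j
        · exact Or.inl hyj
        · exact Or.inr hyj
      · rintro (h | h)
        · exact ⟨0, by omega, h⟩
        · exact ⟨1, by omega, h⟩
    have hkey := Finset.card_union_add_card_inter (ballF (zz 0)) (ballF (zz 1))
    rw [card_inter_dist_one h01, card_ballF hq, card_ballF hq] at hkey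
    rw [hU]
    have hB : (1:ℕ) * (q + 1) = q + 1 := by ring
    omega
  | succ m ih =>
    have ih' := ih (fun j k hjk hk => hd j k hjk (by omega))
    rw [show m + 1 + 2 = (m + 2) + 1 from by omega]
    set r := m + 2 with hr
    have hUsucc : UB zz (r + 1) = UB zz r ∪ ballF (zz r) := by
      ext y
      simp only [UB, mem_biUnion, mem_range, mem_union]
      constructor
      · rintro ⟨j, hj, hyj⟩
        rcases Nat.lt_succ_iff_lt_or_eq.mp hj with h | rfl
        · exact Or.inl ⟨j, h, hyj⟩
        · exact Or.inr hyj
      · rintro (⟨j, hj, hyj⟩ | h)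
        · exact ⟨j, by omega, hyj⟩
        · exact ⟨r, by omega, h⟩
    -- the intersection of the new ball with the old union
    have hintr : UB zz r ∩ ballF (zz r)
        = (ballF (zz m) ∩ ballF (zz r)) ∪ (ballF (zz (m + 1)) ∩ ballF (zz r)) := by
      ext y
      simp only [UB, mem_inter, mem_biUnion, mem_range, mem_union]
      constructor
      · rintro ⟨⟨j, hj, hyj⟩, hyr⟩
        rcases (by omega : j = m ∨ j = m + 1 ∨ j + 2 < r) with rfl | rfl | hlt
        · exact Or.inl ⟨hyj, hyr⟩
        · exact Or.inr ⟨hyj, hyr⟩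
        · exfalso
          have hdist : 3 ≤ hammingDist (zz j) (zz r) := by
            rw [hd j r (by omega) (by omega)]
            omega
          have := inter_empty_dist_ge_three hdist
          have hmem : y ∈ ballF (zz j) ∩ ballF (zz r) := by
            simp only [mem_inter]; exact ⟨hyj, hyr⟩
          rw [this] at hmem
          exact absurd hmem (Finset.notMem_empty y)
      · rintro (⟨h1, h2⟩ | ⟨h1, h2⟩)
        · exact ⟨⟨m, by omega, h1⟩, h2⟩
        · exact ⟨⟨m + 1, by omega, h1⟩, h2⟩
    have hd1 : hammingDist (zz m) (zz (m + 1)) = 1 := by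
      rw [hd m (m + 1) (by omega) (by omega)]; omega
    have hd2 : hammingDist (zz (m + 1)) (zz r) = 1 := by
      rw [hd (m + 1) r (by omega) (by omega)]; omega
    have hd3 : hammingDist (zz m) (zz r) = 2 := by
      rw [hd m r (by omega) (by omega)]; omega
    have hinter3 : (ballF (zz m) ∩ ballF (zz r)) ∩ (ballF (zz (m + 1)) ∩ ballF (zz r))
        = {zz (m + 1)} := by
      have hassoc : (ballF (zz m) ∩ ballF (zz r)) ∩ (ballF (zz (m + 1)) ∩ ballF (zz r))
          = ballF (zz m) ∩ ballF (zz (m + 1)) ∩ ballF (zz r) := by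
        ext y; simp only [mem_inter]; tauto
      rw [hassoc]
      exact inter_three hd1 hd2 hd3
    have hcard_int : (UB zz r ∩ ballF (zz r)).card = q + 1 := by
      rw [hintr]
      have hk := Finset.card_union_add_card_inter
        (ballF (zz m) ∩ ballF (zz r)) (ballF (zz (m + 1)) ∩ ballF (zz r))
      rw [hinter3, Finset.card_singleton, card_inter_dist_two hd3,
        card_inter_dist_one hd2] at hk
      omega
    have hkey := Finset.card_union_add_card_inter (UB zz r) (ballF (zz r))
    rw [hcard_int, card_ballF hq] at hkey
    rw [← hUsucc] at hkey
    -- arithmetic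
    have e1 : (m + 1 + 1) * (q + 1) = (m + 1) * (q + 1) + (q + 1) := by ring
    have e2 : (r + 1) * (1 + n * (q - 1)) = r * (1 + n * (q - 1)) + (1 + n * (q - 1)) := by
      ring
    rw [e1, e2]
    omega
end Ham
lemma delAt_apply {q n : ℕ} (x : Fin (n + 1) → Fin q) (d : Fin (n + 1)) (i : Fin n) :
    delAt x d i = if (i : ℕ) < (d : ℕ) then x i.castSucc else x i.succ := by
  show x (d.succAbove i) = _
  rw [Fin.succAbove]
  by_cases h : (i : ℕ) < (d : ℕ)
  · rw [if_pos h, if_pos (by rwa [Fin.lt_def, Fin.coe_castSucc])]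
  · rw [if_neg h, if_neg (by rwa [Fin.lt_def, Fin.coe_castSucc])]

lemma hammingDist_delAt {q n : ℕ} (x : Fin (n + 1) → Fin q) (d d' : Fin (n + 1))
    (h : (d : ℕ) ≤ (d' : ℕ)) :
    hammingDist (delAt x d) (delAt x d') =
      ((Finset.univ.filter fun i : Fin n => x i.castSucc ≠ x i.succ).filter
        fun i : Fin n => (d : ℕ) ≤ (i : ℕ) ∧ (i : ℕ) < (d' : ℕ)).card := by
  rw [hd_eq]
  congr 1
  ext i
  simp only [Finset.mem_filter, Finset.mem_univ, true_and]
  rw [delAt_apply, delAt_apply]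
  by_cases h1 : (i : ℕ) < (d : ℕ)
  · rw [if_pos h1, if_pos (lt_of_lt_of_le h1 h)]
    exact iff_of_false (fun hc => hc rfl) (fun hc => absurd hc.2.1 (by omega))
  · by_cases h2 : (i : ℕ) < (d' : ℕ)
    · rw [if_neg h1, if_pos h2]
      constructor
      · intro hne
        exact ⟨fun hc => hne hc.symm, by omega, h2⟩
      · rintro ⟨hne, -, -⟩
        exact fun hc => hne hc.symm
    · rw [if_neg h1, if_neg h2]
      exact iff_of_false (fun hc => hc rfl) (fun hc => absurd hc.2.2 h2)

theorem stmt_4 (q n : ℕ) (hq : 2 ≤ q) (x : Fin (n + 1) → Fin q) (hr : 2 ≤ runs x) :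
    ((ballDS 1 x).ncard : ℤ) =
      (runs x : ℤ) * ((((n : ℤ) + 1) - 3) * ((q : ℤ) - 1) + ((q : ℤ) - 2)) + ((q : ℤ) + 2) := by
  set E := (Finset.univ.filter fun i : Fin n => x i.castSucc ≠ x i.succ) with hEdef
  have hruns : runs x = 1 + E.card := rfl
  obtain ⟨s', hs'⟩ : ∃ s', E.card = s' + 1 := ⟨E.card - 1, by omega⟩
  have hrunsval : runs x = s' + 2 := by omega
  let e : Fin (s' + 1) ≃o { i // i ∈ E } := E.orderIsoOfFin hs'
  let dF : ℕ → Fin (n + 1) := fun m =>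
    if h : m < s' + 1 then ((e ⟨m, h⟩ : Fin n)).castSucc else Fin.last n
  let zz : ℕ → Fin n → Fin q := fun m => delAt x (dF m)
  have hzz : ∀ m, zz m = delAt x (dF m) := fun _ => rfl
  have hdFlt : ∀ (m : ℕ) (h : m < s' + 1), (dF m : ℕ) = ((e ⟨m, h⟩ : Fin n) : ℕ) := by
    intro m h
    show ((if h : m < s' + 1 then ((e ⟨m, h⟩ : Fin n)).castSucc else Fin.last n : Fin (n+1)) : ℕ) = _
    rw [dif_pos h, Fin.coe_castSucc]
  have hdFge : ∀ (m : ℕ), ¬ m < s' + 1 → (dF m : ℕ) = n := by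
    intro m h
    show ((if h : m < s' + 1 then ((e ⟨m, h⟩ : Fin n)).castSucc else Fin.last n : Fin (n+1)) : ℕ) = _
    rw [dif_neg h, Fin.val_last]
  have hmono : ∀ a b : Fin (s' + 1), a ≤ b ↔ ((e a : Fin n) : ℕ) ≤ ((e b : Fin n) : ℕ) := by
    intro a b
    rw [← e.le_iff_le, ← Subtype.coe_le_coe, Fin.le_def]
  have hmonolt : ∀ a b : Fin (s' + 1), a < b ↔ ((e a : Fin n) : ℕ) < ((e b : Fin n) : ℕ) := by
    intro a b
    rw [← e.lt_iff_lt, ← Subtype.coe_lt_coe, Fin.lt_def]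
  have hmem_iff : ∀ i : Fin n, i ∈ E ↔ ∃ a : Fin (s' + 1), (e a : Fin n) = i := by
    intro i
    constructor
    · intro hi
      exact ⟨e.symm ⟨i, hi⟩, by simp⟩
    · rintro ⟨a, rfl⟩
      exact (e a).2
  -- counting changes in intervals
  have hcount : ∀ j k : ℕ, j ≤ k → k ≤ s' + 1 →
      (E.filter fun i : Fin n => (dF j : ℕ) ≤ (i : ℕ) ∧ (i : ℕ) < (dF k : ℕ)).card = k - j := by
    intro j k hjk hk
    have himg : (E.filter fun i : Fin n => (dF j : ℕ) ≤ (i : ℕ) ∧ (i : ℕ) < (dF k : ℕ))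
        = (Finset.univ.filter fun a : Fin (s' + 1) => j ≤ (a : ℕ) ∧ (a : ℕ) < k).image
            (fun a => (e a : Fin n)) := by
      ext i
      simp only [Finset.mem_filter, Finset.mem_image, Finset.mem_univ, true_and]
      constructor
      · rintro ⟨hiE, h1, h2⟩
        obtain ⟨a, rfl⟩ := (hmem_iff i).mp hiE
        by_cases hj : j < s' + 1
        · refine ⟨a, ⟨?_, ?_⟩, rfl⟩
          · rw [hdFlt j hj] at h1
            exact (hmono ⟨j, hj⟩ a).mpr h1
          · by_cases hks : k < s' + 1
            · rw [hdFlt k hks] at h2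
              exact (hmonolt a ⟨k, hks⟩).mpr h2
            · omega
        · exfalso
          rw [hdFge j hj] at h1
          exact absurd ((e a : Fin n)).isLt (by omega)
      · rintro ⟨a, ⟨ha1, ha2⟩, rfl⟩
        have hj : j < s' + 1 := by omega
        refine ⟨(hmem_iff _).mpr ⟨a, rfl⟩, ?_, ?_⟩
        · rw [hdFlt j hj]
          exact (hmono ⟨j, hj⟩ a).mp ha1
        · by_cases hks : k < s' + 1
          · rw [hdFlt k hks]
            exact (hmonolt a ⟨k, hks⟩).mp ha2
          · rw [hdFge k hks]
            exact ((e a : Fin n)).isLt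
    rw [himg]
    rw [Finset.card_image_of_injective _
      (fun a b hab => e.injective (Subtype.val_injective hab))]
    rw [← Nat.card_Ico j k]
    apply Finset.card_bij (fun (a : Fin (s' + 1)) _ => (a : ℕ))
    · intro a ha
      simp only [Finset.mem_filter, Finset.mem_univ, true_and] at ha
      simp only [Finset.mem_Ico]
      exact ha
    · intro a _ b _ hab
      exact Fin.val_injective hab
    · intro b hb
      simp only [Finset.mem_Ico] at hb
      exact ⟨⟨b, by omega⟩, by simp [hb.1, hb.2], rfl⟩
  -- monotonicity of dF
  have hdFmono : ∀ j k : ℕ, j ≤ k → k ≤ s' + 1 → (dF j : ℕ) ≤ (dF k : ℕ) := by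
    intro j k hjk hk
    by_cases hj : j < s' + 1
    · by_cases hks : k < s' + 1
      · rw [hdFlt j hj, hdFlt k hks]
        exact (hmono ⟨j, hj⟩ ⟨k, hks⟩).mp hjk
      · rw [hdFlt j hj, hdFge k hks]
        exact le_of_lt ((e _ : Fin n)).isLt
    · have : j = s' + 1 := by omega
      have : k = s' + 1 := by omega
      rw [hdFge j hj, hdFge k (by omega)]
  -- distance hypothesis
  have hdist : ∀ j k : ℕ, j ≤ k → k < s' + 2 → hammingDist (zz j) (zz k) = k - j := by
    intro j k hjk hk
    rw [hzz, hzz, hammingDist_delAt x _ _ (hdFmono j k hjk (by omega)), ← hEdef,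
      hcount j k hjk (by omega)]
  -- coverage
  have hcover : ballDS 1 x = ↑(UB zz (s' + 2)) := by
    ext y
    simp only [ballDS, Set.mem_setOf_eq, Finset.mem_coe, UB, Finset.mem_biUnion,
      Finset.mem_range]
    constructor
    · rintro ⟨d, hd⟩
      suffices hsuff : ∃ m, m < s' + 2 ∧ delAt x d = zz m by
        obtain ⟨m, h1, h2⟩ := hsuff
        exact ⟨m, h1, mem_ballF.mpr (h2 ▸ hd)⟩
      by_cases hS : (E.filter fun i : Fin n => (d : ℕ) ≤ (i : ℕ)).Nonempty
      · set i0 := (E.filter fun i : Fin n => (d : ℕ) ≤ (i : ℕ)).min' hS with hi0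
        have hi0mem := Finset.min'_mem _ hS
        rw [← hi0] at hi0mem
        rw [Finset.mem_filter] at hi0mem
        obtain ⟨a, ha⟩ := (hmem_iff i0).mp hi0mem.1
        refine ⟨(a : ℕ), by omega, ?_⟩
        have hdFa : (dF (a : ℕ) : ℕ) = (i0 : ℕ) := by
          rw [hdFlt (a : ℕ) a.isLt]
          simp only [Fin.eta]
          exact congrArg Fin.val ha
        apply hammingDist_eq_zero.mp
        rw [hzz, hammingDist_delAt x _ _ (by omega), ← hEdef]
        rw [Finset.card_eq_zero]
        rw [Finset.eq_empty_iff_forall_notMem]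
        intro i hi
        rw [Finset.mem_filter] at hi
        obtain ⟨hiE, h1, h2⟩ := hi
        have : i0 ≤ i := Finset.min'_le _ i (Finset.mem_filter.mpr ⟨hiE, h1⟩)
        rw [Fin.le_def] at this
        omega
      · refine ⟨s' + 1, by omega, ?_⟩
        apply hammingDist_eq_zero.mp
        rw [hzz, hammingDist_delAt x _ _ (by rw [hdFge (s' + 1) (by omega)]; omega), ← hEdef]
        rw [Finset.card_eq_zero, Finset.eq_empty_iff_forall_notMem]
        intro i hi
        rw [Finset.mem_filter] at hi
        exact hS ⟨i, Finset.mem_filter.mpr ⟨hi.1, hi.2.1⟩⟩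
    · rintro ⟨m, hm, hym⟩
      exact ⟨dF m, mem_ballF.mp hym⟩
  -- final computation
  have hfin := card_UB (by omega : 1 ≤ q) zz s'
    (by intro j k hjk hk; exact hdist j k hjk hk)
  rw [hcover, Set.ncard_coe_finset, hrunsval]
  obtain ⟨Q, rfl⟩ : ∃ Q, q = Q + 2 := ⟨q - 2, by omega⟩
  have hsub : Q + 2 - 1 = Q + 1 := rfl
  rw [hsub] at hfin
  have hfinZ : ((UB zz (s' + 2)).card : ℤ) + ((s' : ℤ) + 1) * ((Q : ℤ) + 3)
      = ((s' : ℤ) + 2) * (1 + (n : ℤ) * ((Q : ℤ) + 1)) + 1 := by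
    exact_mod_cast hfin
  push_cast
  linear_combination hfinZ
end

section
/- Let S1, S2, S3 be finite sets of integers such that for all i ∈ S1, j ∈ S2, k ∈ S3 we have i < j < k. If ∑_{j∈S1} j^m + ∑_{j∈S2} j^m = ∑_{j∈S3} j^m for all m ∈ {0,1,2}, then S1, S2, S3 are all empty. -/
theorem stmt_8 (S1 S2 S3 : Finset ℤ)
    (h12 : ∀ i ∈ S1, ∀ j ∈ S2, i < j)
    (h23 : ∀ j ∈ S2, ∀ k ∈ S3, j < k)
    (h13 : ∀ i ∈ S1, ∀ k ∈ S3, i < k)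
    (hsum : ∀ m ∈ ({0, 1, 2} : Finset ℕ),
      ∑ j ∈ S1, j ^ m + ∑ j ∈ S2, j ^ m = ∑ j ∈ S3, j ^ m) :
    S1 = ∅ ∧ S2 = ∅ ∧ S3 = ∅ := by
  have h0 := hsum 0 (by simp)
  have h1 := hsum 1 (by simp)
  simp only [pow_zero, pow_one, Finset.sum_const, nsmul_eq_mul, mul_one] at h0 h1
  -- h0 : (S1.card : ℤ) + S2.card = S3.card
  by_cases hT : (S1 ∪ S2) = ∅
  · have hS1 : S1 = ∅ := by
      rw [Finset.union_eq_empty] at hT; exact hT.1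
    have hS2 : S2 = ∅ := by
      rw [Finset.union_eq_empty] at hT; exact hT.2
    refine ⟨hS1, hS2, ?_⟩
    subst hS1; subst hS2
    simp at h0
    exact Finset.card_eq_zero.mp (by exact_mod_cast h0.symm)
  · exfalso
    have hne : (S1 ∪ S2).Nonempty := Finset.nonempty_iff_ne_empty.mpr hT
    set t := (S1 ∪ S2).max' hne with ht
    have htmem := (S1 ∪ S2).max'_mem hne
    have htS3 : ∀ k ∈ S3, t + 1 ≤ k := by
      intro k hk
      rcases Finset.mem_union.mp htmem with h | h
      · exact h13 t h k hk
      · exact h23 t h k hk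
    have hb1 : ∑ j ∈ S1, j ≤ S1.card • t :=
      Finset.sum_le_card_nsmul _ _ _ (fun x hx =>
        (S1 ∪ S2).le_max' x (Finset.mem_union_left _ hx))
    have hb2 : ∑ j ∈ S2, j ≤ S2.card • t :=
      Finset.sum_le_card_nsmul _ _ _ (fun x hx =>
        (S1 ∪ S2).le_max' x (Finset.mem_union_right _ hx))
    have hb3 : S3.card • (t + 1) ≤ ∑ k ∈ S3, k :=
      Finset.card_nsmul_le_sum _ _ _ htS3
    simp only [nsmul_eq_mul] at hb1 hb2 hb3
    have hc3 : 1 ≤ (S3.card : ℤ) := by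
      have hpos : 0 < S1.card + S2.card := by
        rcases Finset.mem_union.mp htmem with h | h
        · exact Nat.lt_of_lt_of_le (Finset.card_pos.mpr ⟨t, h⟩) (Nat.le_add_right _ _)
        · exact Nat.lt_of_lt_of_le (Finset.card_pos.mpr ⟨t, h⟩) (Nat.le_add_left _ _)
      have : (0 : ℤ) < S1.card + S2.card := by exact_mod_cast hpos
      linarith [h0]
    have hmul : (S1.card : ℤ) * t + (S2.card : ℤ) * t = (S3.card : ℤ) * t := by
      rw [← add_mul, h0]
    nlinarith [hb1, hb2, hb3, h1, hc3, hmul]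
end

section
/- Let S1, S2, S3 be finite sets of integers with i < j < k for all i ∈ S1, j ∈ S2, k ∈ S3. Then the determinant of the 3×3 matrix whose m-th row (m = 0,1,2) is (∑_{j∈S1} j^m, ∑_{j∈S2} j^m, ∑_{j∈S3} j^m) equals ∑_{i∈S1} ∑_{j∈S2} ∑_{k∈S3} (j-i)(k-j)(k-i), and is nonnegative; it is strictly positive if all three sets are nonempty. -/
theorem stmt_10 (S1 S2 S3 : Finset ℤ)
    (h12 : ∀ i ∈ S1, ∀ j ∈ S2, i < j)
    (h23 : ∀ j ∈ S2, ∀ k ∈ S3, j < k)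
    (h13 : ∀ i ∈ S1, ∀ k ∈ S3, i < k) :
    (Matrix.det (Matrix.of fun (m c : Fin 3) => ∑ j ∈ ![S1, S2, S3] c, j ^ (m : ℕ))
        = ∑ i ∈ S1, ∑ j ∈ S2, ∑ k ∈ S3, (j - i) * (k - j) * (k - i)) ∧
      0 ≤ Matrix.det (Matrix.of fun (m c : Fin 3) => ∑ j ∈ ![S1, S2, S3] c, j ^ (m : ℕ)) ∧
      (S1.Nonempty → S2.Nonempty → S3.Nonempty →
        0 < Matrix.det (Matrix.of fun (m c : Fin 3) => ∑ j ∈ ![S1, S2, S3] c, j ^ (m : ℕ))) := by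
  have tri : ∀ f g h : ℤ → ℤ, (∑ i ∈ S1, ∑ j ∈ S2, ∑ k ∈ S3, f i * g j * h k)
      = (∑ i ∈ S1, f i) * (∑ j ∈ S2, g j) * (∑ k ∈ S3, h k) := by
    intro f g h
    simp_rw [Finset.sum_mul_sum, Finset.sum_mul, mul_assoc]
    exact Finset.sum_congr rfl fun i _ => Finset.sum_comm
  have pos : ∀ i ∈ S1, ∀ j ∈ S2, ∀ k ∈ S3, 0 < (j - i) * (k - j) * (k - i) := fun i hi j hj k hk =>
    mul_pos (mul_pos (sub_pos.mpr (h12 i hi j hj)) (sub_pos.mpr (h23 j hj k hk)))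
      (sub_pos.mpr (h13 i hi k hk))
  have key : Matrix.det (Matrix.of fun (m c : Fin 3) => ∑ j ∈ ![S1, S2, S3] c, j ^ (m : ℕ))
      = ∑ i ∈ S1, ∑ j ∈ S2, ∑ k ∈ S3, (j - i) * (k - j) * (k - i) := by
    have rhs : (∑ i ∈ S1, ∑ j ∈ S2, ∑ k ∈ S3, (j - i) * (k - j) * (k - i))
        = (∑ i ∈ S1, ∑ j ∈ S2, ∑ k ∈ S3, (1:ℤ) * j * k^2)
          - (∑ i ∈ S1, ∑ j ∈ S2, ∑ k ∈ S3, (1:ℤ) * j^2 * k)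
          - (∑ i ∈ S1, ∑ j ∈ S2, ∑ k ∈ S3, i * 1 * k^2)
          + (∑ i ∈ S1, ∑ j ∈ S2, ∑ k ∈ S3, i^2 * 1 * k)
          + (∑ i ∈ S1, ∑ j ∈ S2, ∑ k ∈ S3, i * j^2 * 1)
          - (∑ i ∈ S1, ∑ j ∈ S2, ∑ k ∈ S3, i^2 * j * 1) := by
      simp only [← Finset.sum_sub_distrib, ← Finset.sum_add_distrib]
      refine Finset.sum_congr rfl fun i _ => Finset.sum_congr rfl fun j _ =>
        Finset.sum_congr rfl fun k _ => by ring
    rw [rhs, tri, tri, tri, tri, tri, tri, Matrix.det_fin_three]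
    simp only [Matrix.of_apply, Matrix.cons_val_zero, Matrix.cons_val_one, Matrix.head_cons,
      Matrix.cons_val_two, Matrix.tail_cons, Fin.val_zero, Fin.val_one, Fin.val_two,
      pow_zero, pow_one, Finset.sum_const, nsmul_eq_mul, mul_one]
    ring
  refine ⟨key, ?_, ?_⟩
  · rw [key]
    exact Finset.sum_nonneg fun i hi => Finset.sum_nonneg fun j hj =>
      Finset.sum_nonneg fun k hk => (pos i hi j hj k hk).le
  · intro h1 h2 h3
    rw [key]
    exact Finset.sum_pos (fun i hi => Finset.sum_pos (fun j hj =>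
      Finset.sum_pos (fun k hk => pos i hi j hj k hk) h3) h2) h1
end

section
/- A code C ⊆ Σ_q^n is a t-indel s-substitution correcting code if and only if it is a t-deletion s-substitution correcting code. -/
/-- `ReachDS t s x z`: `z` is obtainable from `x` by at most `t` deletions and at most
`s` substitutions (in any order). -/
inductive ReachDS {α : Type*} : ℕ → ℕ → List α → List α → Prop
  | refl (t s : ℕ) (x : List α) : ReachDS t s x x
  | del {t s : ℕ} {x z : List α} (i : ℕ) (hi : i < x.length)
      (h : ReachDS t s (x.eraseIdx i) z) : ReachDS (t + 1) s x z
  | sub {t s : ℕ} {x z : List α} (i : ℕ) (a : α) (hi : i < x.length)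
      (h : ReachDS t s (x.set i a) z) : ReachDS t (s + 1) x z

/-- `ReachIndelS t s x z`: `z` is obtainable from `x` by any combination of at most `t`
insertions/deletions and at most `s` substitutions (in any order). -/
inductive ReachIndelS {α : Type*} : ℕ → ℕ → List α → List α → Prop
  | refl (t s : ℕ) (x : List α) : ReachIndelS t s x x
  | del {t s : ℕ} {x z : List α} (i : ℕ) (hi : i < x.length)
      (h : ReachIndelS t s (x.eraseIdx i) z) : ReachIndelS (t + 1) s x z
  | ins {t s : ℕ} {x z : List α} (i : ℕ) (a : α) (hi : i ≤ x.length)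
      (h : ReachIndelS t s (x.insertIdx i a) z) : ReachIndelS (t + 1) s x z
  | sub {t s : ℕ} {x z : List α} (i : ℕ) (a : α) (hi : i < x.length)
      (h : ReachIndelS t s (x.set i a) z) : ReachIndelS t (s + 1) x z


section Aux
open List
set_option linter.unusedSectionVars false
variable {α : Type*} [DecidableEq α]

/-- Hamming-type distance on the zipped lists. -/
def myham (u v : List α) : ℕ := (u.zip v).countP (fun q => decide (q.1 ≠ q.2))

@[simp] lemma myham_nil_left (v : List α) : myham [] v = 0 := by simp [myham]
@[simp] lemma myham_nil_right (u : List α) : myham u [] = 0 := by simp [myham]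
@[simp] lemma myham_cons (a b : α) (u v : List α) :
    myham (a :: u) (b :: v) = myham u v + (if a = b then 0 else 1) := by
  by_cases h : a = b <;> simp [myham, List.countP_cons, h]

lemma myham_self (x : List α) : myham x x = 0 := by
  induction x with
  | nil => simp
  | cons a x ih => simp [ih]

lemma myham_eraseIdx (u v : List α) (j : ℕ) :
    myham (u.eraseIdx j) (v.eraseIdx j) ≤ myham u v := by
  induction j generalizing u v with
  | zero =>
    cases u with
    | nil => simp
    | cons a u =>
      cases v with
      | nil => simp
      | cons b v => simp [List.eraseIdx]
  | succ j ih =>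
    cases u with
    | nil => simp
    | cons a u =>
      cases v with
      | nil => simp
      | cons b v =>
        simp only [List.eraseIdx_cons_succ, myham_cons]
        have := ih u v
        omega

lemma ReachDS.cons {t s : ℕ} {x z : List α} (a : α) (h : ReachDS t s x z) :
    ReachDS t s (a :: x) (a :: z) := by
  induction h with
  | refl => exact .refl _ _ _
  | del i hi h ih =>
    exact .del (i + 1) (by simpa using Nat.succ_lt_succ hi)
      (by simpa [List.eraseIdx_cons_succ] using ih)
  | sub i b hi h ih =>
    exact .sub (i + 1) b (by simpa using Nat.succ_lt_succ hi)
      (by simpa using ih)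

lemma ReachDS.mono {t s t' s' : ℕ} {x z : List α} (h : ReachDS t s x z)
    (ht : t ≤ t') (hs : s ≤ s') : ReachDS t' s' x z := by
  induction h generalizing t' s' with
  | refl => exact .refl _ _ _
  | del i hi h ih =>
    obtain ⟨k, rfl⟩ : ∃ k, t' = k + 1 := ⟨t' - 1, by omega⟩
    exact .del i hi (ih (by omega) hs)
  | sub i a hi h ih =>
    obtain ⟨k, rfl⟩ : ∃ k, s' = k + 1 := ⟨s' - 1, by omega⟩
    exact .sub i a hi (ih ht (by omega))

lemma ReachDS.trans {t1 s1 : ℕ} {x y : List α}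
    (h1 : ReachDS t1 s1 x y) :
    ∀ {t2 s2 : ℕ} {z : List α}, ReachDS t2 s2 y z → ReachDS (t1 + t2) (s1 + s2) x z := by
  induction h1 with
  | refl => exact fun h2 => h2.mono (by omega) (by omega)
  | del i hi h ih =>
    exact fun h2 => (ReachDS.del i hi (ih h2)).mono (by omega) (by omega)
  | sub i a hi h ih =>
    exact fun h2 => (ReachDS.sub i a hi (ih h2)).mono (by omega) (by omega)

lemma ReachDS.toIndel {t s : ℕ} {x z : List α} (h : ReachDS t s x z) :
    ReachIndelS t s x z := by
  induction h with
  | refl => exact .refl _ _ _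
  | del i hi h ih => exact .del i hi ih
  | sub i a hi h ih => exact .sub i a hi ih

lemma reachDS_of_sublist {u x : List α} (h : u <+ x) :
    ∀ t s : ℕ, x.length ≤ u.length + t → ReachDS t s x u := by
  induction h with
  | slnil => intro t s _; exact .refl _ _ _
  | cons a h ih =>
    intro t s hlen
    have hle := h.length_le
    obtain ⟨k, rfl⟩ : ∃ k, t = k + 1 := ⟨t - 1, by simp at hlen; omega⟩
    exact .del 0 (by simp) (by simpa using ih k s (by simp at hlen ⊢; omega))
  | cons_cons a h ih =>
    intro t s hlen
    exact (ih t s (by simp only [List.length_cons] at hlen; omega)).cons a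

lemma reachDS_of_myham : ∀ (u v : List α) (s : ℕ), u.length = v.length →
    myham u v ≤ s → ReachDS 0 s u v := by
  intro u
  induction u with
  | nil =>
    intro v s hl _
    obtain rfl : v = [] := by simpa using hl.symm
    exact .refl _ _ _
  | cons a u ih =>
    intro v s hl hh
    cases v with
    | nil => simp at hl
    | cons b v =>
      by_cases hab : a = b
      · subst hab
        exact (ih v s (by simpa using hl) (by simpa using hh)).cons a
      · simp [hab] at hh
        obtain ⟨k, rfl⟩ : ∃ k, s = k + 1 := ⟨s - 1, by omega⟩
        refine .sub 0 b (by simp) ?_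
        simpa using (ih v k (by simpa using hl) (by omega)).cons b

lemma sublist_insertIdx : ∀ (i : ℕ) (x : List α) (a : α) (u : List α),
    i ≤ x.length → u <+ x.insertIdx i a →
    u <+ x ∨ ∃ j, j < u.length ∧ u.eraseIdx j <+ x := by
  intro i
  induction i with
  | zero =>
    intro x a u _ h
    rw [List.insertIdx_zero] at h
    cases h with
    | cons _ h' => exact .inl h'
    | cons_cons _ h' => exact .inr ⟨0, by simp, by simpa using h'⟩
  | succ i ih =>
    intro x a u hi h
    cases x with
    | nil => simp at hi
    | cons b x =>
      rw [List.insertIdx_succ_cons] at h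
      cases h with
      | cons _ h' =>
        rcases ih x a u (by simpa using hi) h' with h1 | ⟨j, hj, hs⟩
        · exact .inl (h1.cons b)
        · exact .inr ⟨j, hj, hs.cons b⟩
      | @cons_cons u' _ _ h' =>
        rcases ih x a u' (by simpa using hi) h' with h1 | ⟨j, hj, hs⟩
        · exact .inl (h1.cons₂ b)
        · exact .inr ⟨j + 1, by simpa using Nat.succ_lt_succ hj,
            by simpa [List.eraseIdx_cons_succ] using hs.cons₂ b⟩

lemma sublist_set : ∀ (x : List α) (i : ℕ) (a : α) (u : List α),
    u <+ x.set i a →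
    ∃ u', u' <+ x ∧ u'.length = u.length ∧ ∀ v, myham u' v ≤ myham u v + 1 := by
  intro x
  induction x with
  | nil =>
    intro i a u h
    simp only [List.set_nil] at h
    obtain rfl : u = [] := by simpa using h
    exact ⟨[], List.Sublist.refl _, rfl, by simp⟩
  | cons b x ih =>
    intro i a u h
    cases i with
    | zero =>
      simp only [List.set_cons_zero] at h
      cases h with
      | cons _ h' =>
        exact ⟨u, h'.cons b, rfl, fun v => by omega⟩
      | @cons_cons u' _ _ h' =>
        refine ⟨b :: u', h'.cons₂ b, by simp, fun v => ?_⟩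
        cases v with
        | nil => simp
        | cons c v => simp only [myham_cons]; split_ifs <;> omega
    | succ i =>
      simp only [List.set_cons_succ] at h
      cases h with
      | cons _ h' =>
        obtain ⟨u', hs, hl, hh⟩ := ih i a u h'
        exact ⟨u', hs.cons b, hl, hh⟩
      | @cons_cons u' _ _ h' =>
        obtain ⟨u'', hs, hl, hh⟩ := ih i a u' h'
        refine ⟨b :: u'', hs.cons₂ b, by simpa using hl, fun v => ?_⟩
        cases v with
        | nil => simp
        | cons c v =>
          simp only [myham_cons]
          have := hh v
          omega

lemma exists_common_sublist : ∀ (z v1 v2 : List α), v1 <+ z → v2 <+ z →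
    ∃ w, w <+ v1 ∧ w <+ v2 ∧ v1.length + v2.length ≤ z.length + w.length := by
  intro z
  induction z with
  | nil =>
    intro v1 v2 h1 h2
    obtain rfl : v1 = [] := by simpa using h1
    obtain rfl : v2 = [] := by simpa using h2
    exact ⟨[], List.Sublist.refl _, List.Sublist.refl _, by simp⟩
  | cons a z ih =>
    intro v1 v2 h1 h2
    cases h1 with
    | cons _ h1' =>
      cases h2 with
      | cons _ h2' =>
        obtain ⟨w, hw1, hw2, hlen⟩ := ih v1 v2 h1' h2'
        exact ⟨w, hw1, hw2, by simp; omega⟩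
      | @cons_cons v2' _ _ h2' =>
        obtain ⟨w, hw1, hw2, hlen⟩ := ih v1 v2' h1' h2'
        exact ⟨w, hw1, hw2.cons a, by simp at hlen ⊢; omega⟩
    | @cons_cons v1' _ _ h1' =>
      cases h2 with
      | cons _ h2' =>
        obtain ⟨w, hw1, hw2, hlen⟩ := ih v1' v2 h1' h2'
        exact ⟨w, hw1.cons a, hw2, by simp at hlen ⊢; omega⟩
      | @cons_cons v2' _ _ h2' =>
        obtain ⟨w, hw1, hw2, hlen⟩ := ih v1' v2' h1' h2'
        exact ⟨a :: w, hw1.cons₂ a, hw2.cons₂ a, by simp at hlen ⊢; omega⟩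

lemma reachIndelS_extract {t s : ℕ} {x z : List α} (h : ReachIndelS t s x z) :
    ∃ u v d i, u <+ x ∧ v <+ z ∧ u.length = v.length ∧ myham u v ≤ s ∧
      d + i ≤ t ∧ u.length + d = x.length ∧ v.length + i = z.length := by
  induction h with
  | refl t s x =>
    exact ⟨x, x, 0, 0, List.Sublist.refl _, List.Sublist.refl _, rfl,
      by simp [myham_self], by omega, by omega, by omega⟩
  | @del t s x z j hj h ih =>
    obtain ⟨u, v, d, i, hux, hvz, hl, hh, hdi, hdx, hiz⟩ := ih
    refine ⟨u, v, d + 1, i, hux.trans (List.eraseIdx_sublist x j), hvz, hl, hh,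
      by omega, ?_, hiz⟩
    have := (List.length_eraseIdx : (x.eraseIdx j).length = _)
    rw [if_pos hj] at this
    omega
  | @ins t s x z j a hj h ih =>
    obtain ⟨u, v, d, i, hux, hvz, hl, hh, hdi, hdx, hiz⟩ := ih
    have hlen : (x.insertIdx j a).length = x.length + 1 := by rw [List.length_insertIdx, if_pos hj]
    rcases sublist_insertIdx j x a u hj hux with h1 | ⟨k, hk, hks⟩
    · have hd : 1 ≤ d := by
        have := h1.length_le
        omega
      exact ⟨u, v, d - 1, i, h1, hvz, hl, hh, by omega, by omega, hiz⟩
    · refine ⟨u.eraseIdx k, v.eraseIdx k, d, i + 1, hks,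
        (List.eraseIdx_sublist v k).trans hvz, ?_, ?_, by omega, ?_, ?_⟩ <;>
        [skip; exact (myham_eraseIdx u v k).trans hh; skip; skip] <;>
        · have h1 := (List.length_eraseIdx : (u.eraseIdx k).length = _)
          have h2 := (List.length_eraseIdx : (v.eraseIdx k).length = _)
          rw [if_pos hk] at h1
          rw [if_pos (by omega : k < v.length)] at h2
          omega
  | @sub t s x z j a hj h ih =>
    obtain ⟨u, v, d, i, hux, hvz, hl, hh, hdi, hdx, hiz⟩ := ih
    obtain ⟨u', hs, hlen, hham⟩ := sublist_set x j a u hux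
    refine ⟨u', v, d, i, hs, hvz, by omega, ?_, hdi, by simp at hdx; omega, hiz⟩
    have := hham v
    omega

end Aux

/-- `C` is a `t`-deletion `s`-substitution correcting code. -/
def correctsDS {α : Type*} (t s : ℕ) (C : Set (List α)) : Prop :=
  ∀ c1 ∈ C, ∀ c2 ∈ C, c1 ≠ c2 → ¬∃ z, ReachDS t s c1 z ∧ ReachDS t s c2 z

/-- `C` is a `t`-indel `s`-substitution correcting code. -/
def correctsIndelS {α : Type*} (t s : ℕ) (C : Set (List α)) : Prop :=
  ∀ c1 ∈ C, ∀ c2 ∈ C, c1 ≠ c2 → ¬∃ z, ReachIndelS t s c1 z ∧ ReachIndelS t s c2 z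

theorem stmt_13 (q n t s : ℕ) (C : Set (List (Fin q))) (hC : ∀ c ∈ C, c.length = n) :
    correctsIndelS t s C ↔ correctsDS t s C := by
  constructor
  · intro hI c1 h1 c2 h2 hne hz
    obtain ⟨z, r1, r2⟩ := hz
    exact hI c1 h1 c2 h2 hne ⟨z, r1.toIndel, r2.toIndel⟩
  · intro hD c1 h1 c2 h2 hne hz
    obtain ⟨z, r1, r2⟩ := hz
    obtain ⟨u1, v1, d1, i1, hu1, hv1, hl1, hh1, hdi1, hd1, hi1⟩ := reachIndelS_extract r1
    obtain ⟨u2, v2, d2, i2, hu2, hv2, hl2, hh2, hdi2, hd2, hi2⟩ := reachIndelS_extract r2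
    obtain ⟨w, hw1, hw2, hwlen⟩ := exists_common_sublist z v1 v2 hv1 hv2
    have hc1 := hC c1 h1
    have hc2 := hC c2 h2
    have hw1l := hw1.length_le
    have hw2l := hw2.length_le
    refine hD c1 h1 c2 h2 hne ⟨w, ?_, ?_⟩
    · have A : ReachDS d1 0 c1 u1 := reachDS_of_sublist hu1 d1 0 (by omega)
      have B : ReachDS 0 s u1 v1 := reachDS_of_myham u1 v1 s hl1 hh1
      have Cc : ReachDS i2 0 v1 w := reachDS_of_sublist hw1 i2 0 (by omega)
      exact ((A.trans B).trans Cc).mono (by omega) (by omega)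
    · have A : ReachDS d2 0 c2 u2 := reachDS_of_sublist hu2 d2 0 (by omega)
      have B : ReachDS 0 s u2 v2 := reachDS_of_myham u2 v2 s hl2 hh2
      have Cc : ReachDS i1 0 v2 w := reachDS_of_sublist hw2 i1 0 (by omega)
      exact ((A.trans B).trans Cc).mono (by omega) (by omega)
end

section
/- For integers n, s with n ≥ 2s+2 and s ≥ 1: ∑_{r=2s+2}^{n-1} 2·C(n-2, r-1)·(1/(r-2s)) / C(n-s-1, s) ≤ ((2s+1)/(n-1)) · (2·s!/(n-2s)^s) · 2^{n-1}. -/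
theorem stmt_17 (n s : ℕ) (hs : 1 ≤ s) (hns : 2 * s + 2 ≤ n) :
    ∑ r ∈ Finset.Icc (2 * s + 2) (n - 1),
        2 * ((n - 2).choose (r - 1) : ℝ) * (1 / ((r : ℝ) - 2 * s)) / ((n - s - 1).choose s : ℝ) ≤
      ((2 * (s : ℝ) + 1) / ((n : ℝ) - 1)) * (2 * (s.factorial : ℝ) / ((n : ℝ) - 2 * s) ^ s) *
        2 ^ (n - 1) := by
  have hsr : (1:ℝ) ≤ (s:ℝ) := by exact_mod_cast hs
  have hnr : ((2*s+2 : ℕ):ℝ) ≤ (n:ℝ) := by exact_mod_cast hns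
  push_cast at hnr
  have hn1 : (0:ℝ) < (n:ℝ) - 1 := by nlinarith
  have hn2s : (0:ℝ) < (n:ℝ) - 2*s := by nlinarith
  have hpow : (0:ℝ) < ((n:ℝ) - 2*s) ^ s := pow_pos hn2s s
  -- choose bound: (n-2s)^s ≤ s! * C(n-s-1, s)
  have hkey : (n - 2*s)^s ≤ s.factorial * (n - s - 1).choose s := by
    have h1 : (n - s - 1 + 1 - s) ^ s ≤ (n - s - 1).descFactorial s :=
      Nat.pow_sub_le_descFactorial _ _
    rwa [Nat.descFactorial_eq_factorial_mul_choose,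
      show n - s - 1 + 1 - s = n - 2*s by omega] at h1
  have hcnpos : 0 < (n - s - 1).choose s := Nat.choose_pos (by omega)
  have hcn : (0:ℝ) < ((n - s - 1).choose s : ℝ) := by exact_mod_cast hcnpos
  have hinv : 1 / ((n - s - 1).choose s : ℝ) ≤ (s.factorial : ℝ) / ((n:ℝ) - 2*s)^s := by
    rw [div_le_div_iff₀ hcn hpow, one_mul]
    have : (((n - 2*s)^s : ℕ) : ℝ) ≤ ((s.factorial * (n - s - 1).choose s : ℕ) : ℝ) := by
      exact_mod_cast hkey
    push_cast [Nat.cast_sub (by omega : 2*s ≤ n)] at this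
    linarith
  set K : ℝ := ((2 * (s : ℝ) + 1) / ((n : ℝ) - 1)) * (2 * (s.factorial : ℝ) / ((n : ℝ) - 2 * s) ^ s)
    with hKdef
  have hKpos : 0 ≤ K := by positivity
  have hterm : ∀ r ∈ Finset.Icc (2 * s + 2) (n - 1),
      2 * ((n - 2).choose (r - 1) : ℝ) * (1 / ((r : ℝ) - 2 * s)) / ((n - s - 1).choose s : ℝ)
        ≤ K * ((n-1).choose r : ℝ) := by
    intro r hr
    rw [Finset.mem_Icc] at hr
    obtain ⟨hr1, hr2⟩ := hr
    have hrr : ((2*s+2 : ℕ):ℝ) ≤ (r:ℝ) := by exact_mod_cast hr1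
    push_cast at hrr
    have hrpos : (0:ℝ) < (r:ℝ) := by nlinarith
    have hr2s : (0:ℝ) < (r:ℝ) - 2*s := by nlinarith
    -- identity: (n-1) * C(n-2, r-1) = C(n-1, r) * r
    have hid : ((n:ℝ) - 1) * ((n - 2).choose (r - 1) : ℝ) = ((n-1).choose r : ℝ) * r := by
      have := Nat.add_one_mul_choose_eq (n - 2) (r - 1)
      rw [show n - 2 + 1 = n - 1 by omega, show r - 1 + 1 = r by omega] at this
      have : (((n-1) * (n - 2).choose (r - 1) : ℕ) : ℝ)
          = (((n-1).choose r * r : ℕ) : ℝ) := by exact_mod_cast this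
      push_cast [Nat.cast_sub (by omega : 1 ≤ n)] at this
      linarith
    have hstep1 : 1 / ((r : ℝ) - 2 * s) ≤ (2*(s:ℝ)+1) / r := by
      rw [div_le_div_iff₀ hr2s hrpos, one_mul]
      nlinarith
    have ccnn : (0:ℝ) ≤ ((n - 2).choose (r - 1) : ℝ) := by positivity
    calc 2 * ((n - 2).choose (r - 1) : ℝ) * (1 / ((r : ℝ) - 2 * s)) / ((n - s - 1).choose s : ℝ)
        = 2 * ((n - 2).choose (r - 1) : ℝ) * (1 / ((r : ℝ) - 2 * s))
            * (1 / ((n - s - 1).choose s : ℝ)) := by ring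
      _ ≤ 2 * ((n - 2).choose (r - 1) : ℝ) * ((2*(s:ℝ)+1) / r)
            * ((s.factorial : ℝ) / ((n:ℝ) - 2*s)^s) := by
          apply mul_le_mul
          · apply mul_le_mul_of_nonneg_left hstep1 (by positivity)
          · exact hinv
          · positivity
          · positivity
      _ = K * ((n-1).choose r : ℝ) := by
          have hcc : ((n - 2).choose (r - 1) : ℝ)
              = ((n-1).choose r : ℝ) * r / ((n:ℝ)-1) := by
            field_simp
            linarith [hid]
          rw [hKdef, hcc]
          field_simp
  calc ∑ r ∈ Finset.Icc (2 * s + 2) (n - 1),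
        2 * ((n - 2).choose (r - 1) : ℝ) * (1 / ((r : ℝ) - 2 * s)) / ((n - s - 1).choose s : ℝ)
      ≤ ∑ r ∈ Finset.Icc (2 * s + 2) (n - 1), K * ((n-1).choose r : ℝ) :=
        Finset.sum_le_sum hterm
    _ = K * ∑ r ∈ Finset.Icc (2 * s + 2) (n - 1), ((n-1).choose r : ℝ) :=
        (Finset.mul_sum _ _ _).symm
    _ ≤ K * 2 ^ (n - 1) := by
        apply mul_le_mul_of_nonneg_left _ hKpos
        have hsub : Finset.Icc (2 * s + 2) (n - 1) ⊆ Finset.range n := by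
          intro x hx
          rw [Finset.mem_Icc] at hx
          rw [Finset.mem_range]
          omega
        calc ∑ r ∈ Finset.Icc (2 * s + 2) (n - 1), ((n-1).choose r : ℝ)
            ≤ ∑ r ∈ Finset.range n, ((n-1).choose r : ℝ) :=
              Finset.sum_le_sum_of_subset_of_nonneg hsub (by intros; positivity)
          _ = (2:ℝ) ^ (n - 1) := by
              rw [show n = (n-1) + 1 by omega, ← Nat.cast_sum]
              simp only [Nat.add_sub_cancel]
              rw [Nat.sum_range_choose]
              push_cast
              ring
end
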